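/- arXiv:2402.05535 — 4 statements merged into one kernel-verified Lean document; each statement's English description precedes it below -/
import Mathlib

section
/- Let G = (V, E) be a finite undirected graph and D = (V, S) a DAG that is a valid schedule for G (for each edge of G there is a directed path in D between its endpoints in some direction). If the longest directed path in D has k vertices, then the chromatic number of G is at most k. -/
/-- A (nonempty, simple) directed path in the digraph with edge relation `S`,
represented as a list of vertices. -/
def IsDipath {V : Type*} (S : V → V → Prop) (l : List V) : Prop :=
  l ≠ [] ∧ l.Nodup ∧ l.Chain' S

/-- The depth of a digraph: the maximum number of vertices on a directed path. -/
noncomputable def depthD {V : Type*} (S : V → V → Prop) : ℕ :=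
  sSup {n | ∃ l : List V, IsDipath S l ∧ l.length = n}

/-- The depth of a vertex: the maximum number of vertices on a directed path ending at `v`. -/
noncomputable def vdepth {V : Type*} (S : V → V → Prop) (v : V) : ℕ :=
  sSup {n | ∃ l : List V, IsDipath S l ∧ l.getLast? = some v ∧ l.length = n}

/-- The weighted depth (latency): the maximum over directed paths of the sum of
vertex weights along the path. -/
noncomputable def wdepth {V : Type*} (S : V → V → Prop) (len : V → ℕ+) : ℕ :=
  sSup {n | ∃ l : List V, IsDipath S l ∧ (l.map fun v => (len v : ℕ)).sum = n}

/-- Acyclicity of a digraph (a DAG). -/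
def Acyclic {V : Type*} (S : V → V → Prop) : Prop :=
  ∀ v : V, ¬ Relation.TransGen S v v

/-- A valid schedule for the conflict graph `G`: an acyclic digraph on the same
vertices such that every edge of `G` is connected by a directed path in some direction. -/
def ValidSchedule {V : Type*} (G : SimpleGraph V) (S : V → V → Prop) : Prop :=
  Acyclic S ∧ ∀ u v : V, G.Adj u v →
    Relation.TransGen S u v ∨ Relation.TransGen S v u

section Aux
variable {V : Type*} [Fintype V] {S : V → V → Prop}

lemma dipath_len_le (l : List V) (h : IsDipath S l) : l.length ≤ Fintype.card V :=
  h.2.1.length_le_card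

lemma bdd_v (v : V) : BddAbove {n | ∃ l : List V, IsDipath S l ∧ l.getLast? = some v ∧ l.length = n} :=
  ⟨Fintype.card V, fun n ⟨l, hl, _, hlen⟩ => hlen ▸ dipath_len_le l hl⟩

lemma bdd_d : BddAbove {n | ∃ l : List V, IsDipath S l ∧ l.length = n} :=
  ⟨Fintype.card V, fun n ⟨l, hl, hlen⟩ => hlen ▸ dipath_len_le l hl⟩

lemma one_le_vdepth (v : V) : 1 ≤ vdepth S v :=
  le_csSup (bdd_v v) ⟨[v], ⟨by simp, by simp, List.isChain_singleton _⟩, by simp, by simp⟩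

lemma vdepth_le_depthD (v : V) : vdepth S v ≤ depthD S := by
  rw [vdepth, depthD]
  refine csSup_le ⟨1, ⟨[v], ⟨by simp, by simp, List.isChain_singleton _⟩, by simp, by simp⟩⟩ ?_
  rintro n ⟨l, hl, _, hlen⟩
  exact le_csSup bdd_d ⟨l, hl, hlen⟩

lemma vdepth_lt_of_S (hacy : Acyclic S) {u v : V} (hS : S u v) :
    vdepth S u < vdepth S v := by
  rw [vdepth, vdepth]
  have hne : {n | ∃ l : List V, IsDipath S l ∧ l.getLast? = some u ∧ l.length = n}.Nonempty :=
    ⟨1, ⟨[u], ⟨by simp, by simp, List.isChain_singleton _⟩, by simp, by simp⟩⟩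
  obtain ⟨l, hl, hlast, hlen⟩ := Nat.sSup_mem hne (bdd_v u)
  have hvnotin : v ∉ l := by
    intro hv
    -- pairwise transgen
    have hchain : l.Chain' (Relation.TransGen S) :=
      List.IsChain.imp (fun a b h => Relation.TransGen.single h) hl.2.2
    have hpw : l.Pairwise (Relation.TransGen S) := List.isChain_iff_pairwise.mp hchain
    have hlu : l.getLast (by exact hl.1) = u := by
      rwa [List.getLast?_eq_getLast hl.1, Option.some_inj] at hlast
    rcases List.append_of_mem hv with ⟨l₁, l₂, rfl⟩
    -- u is last of l₁ ++ v :: l₂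
    rcases List.eq_nil_or_concat l₂ with rfl | ⟨l₃, w, rfl⟩
    · -- u = v
      have : u = v := by
        rw [← hlu]; simp [List.getLast_append]
      exact hacy u (Relation.TransGen.single (this ▸ hS))
    · have hw : w = u := by
        have h2 : (l₁ ++ v :: l₃.concat w).getLast? = some w := by
          rw [List.getLast?_append_of_ne_nil _ (by simp)]
          rw [show v :: l₃.concat w = (v :: l₃) ++ [w] by simp]
          exact List.getLast?_concat
        rw [hlast] at h2
        exact (Option.some_inj.mp h2).symm
      have : Relation.TransGen S v u := by
        subst hw
        have := (List.pairwise_append.mp hpw).2.1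
        rw [List.pairwise_cons] at this
        exact this.1 w (by simp)
      exact hacy v (this.trans (Relation.TransGen.single hS))
  have hstep : l.length + 1 ∈ {n | ∃ l : List V, IsDipath S l ∧ l.getLast? = some v ∧ l.length = n} := by
    refine ⟨l ++ [v], ⟨by simp, ?_, ?_⟩, ?_, by simp⟩
    · simp [List.nodup_append, hl.2.1, hvnotin]; exact fun a ha h => hvnotin (h ▸ ha)
    · refine List.isChain_append.mpr ⟨hl.2.2, by simp, ?_⟩
      intro x hx y hy
      simp at hy
      rw [hlast] at hx
      simp at hx
      subst hx; subst hy; exact hS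
    · rw [List.getLast?_append_of_ne_nil _ (by simp)]; simp
  have := le_csSup (bdd_v v) hstep
  omega

lemma vdepth_lt_of_transGen (hacy : Acyclic S) {u v : V} (h : Relation.TransGen S u v) :
    vdepth S u < vdepth S v := by
  induction h with
  | single h => exact vdepth_lt_of_S hacy h
  | tail _ h ih => exact ih.trans (vdepth_lt_of_S hacy h)

end Aux

theorem stmt1 {V : Type*} [Fintype V] (G : SimpleGraph V) (S : V → V → Prop) (k : ℕ)
    (hvalid : ValidSchedule G S) (hdepth : depthD S = k) :
    G.chromaticNumber ≤ (k : ℕ∞) := by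
  have hcol : G.Colorable k := by
    refine ⟨SimpleGraph.Coloring.mk (fun v => ⟨vdepth S v - 1, ?_⟩) ?_⟩
    case refine_1 =>
      have h1 := one_le_vdepth (S := S) v
      have h2 := vdepth_le_depthD (S := S) v
      omega
    case refine_2 =>
      intro u v hadj hne
      have h1u := one_le_vdepth (S := S) u
      have h1v := one_le_vdepth (S := S) v
      have : vdepth S u ≠ vdepth S v := by
        rcases hvalid.2 u v hadj with h | h
        · exact (vdepth_lt_of_transGen hvalid.1 h).ne
        · exact (vdepth_lt_of_transGen hvalid.1 h).ne'
      apply this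
      have := Fin.val_eq_val _ _ |>.mpr hne
      simp at this
      omega
  exact hcol.chromaticNumber_le
end

section
/- For every finite undirected graph G = (V, E), the minimum over all valid schedules D of the depth of D equals the chromatic number χ(G). Here a valid schedule is a DAG on V in which, for every edge {u,v} of G, there is a directed path from u to v or from v to u, and the depth is the maximum number of vertices on a directed path. -/
section Aux

variable {V : Type*} {S : V → V → Prop}

lemma aux_chain'_reflTransGen {l : List V} (hc : l.Chain' S) :
    ∀ {a b : V}, a ∈ l → l.getLast? = some b → Relation.ReflTransGen S a b := by
  induction l with
  | nil => intro a b ha _; simp at ha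
  | cons x l ih =>
    intro a b ha hb
    rcases List.mem_cons.1 ha with rfl | ha
    · cases l with
      | nil =>
        simp only [List.getLast?_singleton, Option.some.injEq] at hb
        subst hb; exact Relation.ReflTransGen.refl
      | cons y l' =>
        have h1 : S a y := (List.isChain_cons_cons.1 hc).1
        have h2 := ih (List.isChain_cons_cons.1 hc).2 List.mem_cons_self
          (by simpa using hb)
        exact (Relation.ReflTransGen.single h1).trans h2
    · cases l with
      | nil => simp at ha
      | cons y l' =>
        exact ih (List.isChain_cons_cons.1 hc).2 ha (by simpa using hb)

lemma aux_bddD [Fintype V] :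
    BddAbove {n | ∃ l : List V, IsDipath S l ∧ l.length = n} := by
  refine ⟨Fintype.card V, fun n hn => ?_⟩
  obtain ⟨l, ⟨_, hnd, _⟩, rfl⟩ := hn
  exact hnd.length_le_card

lemma aux_bddV [Fintype V] (v : V) :
    BddAbove {n | ∃ l : List V, IsDipath S l ∧ l.getLast? = some v ∧ l.length = n} := by
  refine ⟨Fintype.card V, fun n hn => ?_⟩
  obtain ⟨l, ⟨_, hnd, _⟩, _, rfl⟩ := hn
  exact hnd.length_le_card

lemma aux_vdepth_mem [Fintype V] (v : V) :
    ∃ l : List V, IsDipath S l ∧ l.getLast? = some v ∧ l.length = vdepth S v := by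
  have hne : {n | ∃ l : List V, IsDipath S l ∧ l.getLast? = some v ∧ l.length = n}.Nonempty :=
    ⟨1, [v], ⟨by simp, by simp, List.isChain_singleton _⟩, by simp, rfl⟩
  exact Nat.sSup_mem hne (aux_bddV v)

lemma aux_one_le_vdepth [Fintype V] (v : V) : 1 ≤ vdepth S v := by
  obtain ⟨l, ⟨hne, _, _⟩, _, hlen⟩ := aux_vdepth_mem (S := S) v
  rw [← hlen]
  exact List.length_pos_iff.2 hne

lemma aux_vdepth_le_depth [Fintype V] (v : V) : vdepth S v ≤ depthD S := by
  obtain ⟨l, hl, _, hlen⟩ := aux_vdepth_mem (S := S) v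
  exact le_csSup aux_bddD ⟨l, hl, hlen⟩

lemma aux_vdepth_lt [Fintype V] (hA : Acyclic S) {u v : V} (h : S u v) :
    vdepth S u < vdepth S v := by
  obtain ⟨l, ⟨hne, hnd, hch⟩, hlast, hlen⟩ := aux_vdepth_mem (S := S) u
  have hvnot : v ∉ l := by
    intro hv
    exact hA v (Relation.TransGen.tail' (aux_chain'_reflTransGen hch hv hlast) h)
  have hmem : vdepth S u + 1 ∈
      {n | ∃ l : List V, IsDipath S l ∧ l.getLast? = some v ∧ l.length = n} := by
    refine ⟨l ++ [v], ⟨by simp, ?_, ?_⟩, ?_, by simp [hlen]⟩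
    · simp [List.nodup_append, hnd, hvnot]
      intro a ha hav; exact hvnot (hav ▸ ha)
    · refine hch.append (by simp) ?_
      intro x hx y hy
      rw [hlast] at hx
      simp only [List.head?_cons, Option.mem_def, Option.some.injEq] at hx hy
      subst hx; subst hy; exact h
    · simp
  have h' : vdepth S u + 1 ≤ vdepth S v := le_csSup (aux_bddV v) hmem
  omega

lemma aux_vdepth_lt_trans [Fintype V] (hA : Acyclic S) {u v : V}
    (h : Relation.TransGen S u v) : vdepth S u < vdepth S v := by
  induction h with
  | single h => exact aux_vdepth_lt hA h
  | tail _ h ih => exact ih.trans (aux_vdepth_lt hA h)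

lemma aux_colorable_of_valid [Fintype V] {G : SimpleGraph V} (hS : ValidSchedule G S) :
    G.Colorable (depthD S) := by
  have h1 : ∀ v : V, 1 ≤ vdepth S v := aux_one_le_vdepth
  have h2 : ∀ v : V, vdepth S v ≤ depthD S := aux_vdepth_le_depth
  refine ⟨SimpleGraph.Coloring.mk
    (fun v => ⟨vdepth S v - 1, by have := h1 v; have := h2 v; omega⟩) ?_⟩
  intro u v hadj heq
  have hne : vdepth S u ≠ vdepth S v := by
    rcases hS.2 u v hadj with h | h
    · exact (aux_vdepth_lt_trans hS.1 h).ne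
    · exact (aux_vdepth_lt_trans hS.1 h).ne'
  simp only [Fin.mk.injEq] at heq
  have := h1 u; have := h1 v
  omega

lemma aux_schedule_of_coloring [Fintype V] [Nonempty V] {G : SimpleGraph V} {k : ℕ}
    (C : G.Coloring (Fin k)) :
    ∃ S : V → V → Prop, ValidSchedule G S ∧ depthD S ≤ k := by
  refine ⟨fun u v => G.Adj u v ∧ C u < C v, ⟨?_, ?_⟩, ?_⟩
  · intro v hv
    have mono : ∀ a b : V, Relation.TransGen (fun u v => G.Adj u v ∧ C u < C v) a b →
        C a < C b := by
      intro a b h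
      induction h with
      | single h => exact h.2
      | tail _ h ih => exact ih.trans h.2
    exact absurd (mono v v hv) (lt_irrefl _)
  · intro u v h
    rcases lt_or_gt_of_ne (C.valid h) with hlt | hlt
    · exact Or.inl (Relation.TransGen.single ⟨h, hlt⟩)
    · exact Or.inr (Relation.TransGen.single ⟨h.symm, hlt⟩)
  · have hne0 : {n | ∃ l : List V,
        IsDipath (fun u v => G.Adj u v ∧ C u < C v) l ∧ l.length = n}.Nonempty :=
      ⟨1, [Classical.arbitrary V], ⟨by simp, by simp, List.isChain_singleton _⟩, rfl⟩
    apply csSup_le hne0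
    rintro n ⟨l, ⟨hne, hnd, hch⟩, rfl⟩
    have hch2 : (l.map C).Chain' (· < ·) :=
      (List.isChain_map C).2 (hch.imp fun a b hab => hab.2)
    have hpw : (l.map C).Pairwise (· < ·) := List.isChain_iff_pairwise.1 hch2
    have hnd2 : (l.map C).Nodup := hpw.imp fun h => h.ne
    calc l.length = (l.map C).length := (List.length_map _).symm
      _ ≤ Fintype.card (Fin k) := hnd2.length_le_card
      _ = k := Fintype.card_fin k

end Aux

theorem stmt4 {V : Type*} [Fintype V] [Nonempty V] (G : SimpleGraph V) :
    (↑(sInf {n : ℕ | ∃ S : V → V → Prop, ValidSchedule G S ∧ depthD S = n}) : ℕ∞)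
      = G.chromaticNumber := by
  classical
  obtain ⟨C⟩ := G.colorable_chromaticNumber_of_fintype
  have hχne : G.chromaticNumber ≠ ⊤ :=
    (lt_of_le_of_lt G.colorable_of_fintype.chromaticNumber_le (ENat.coe_lt_top _)).ne
  have hχ : (G.chromaticNumber.toNat : ℕ∞) = G.chromaticNumber := ENat.coe_toNat hχne
  obtain ⟨S, hS, hd⟩ := aux_schedule_of_coloring C
  set T := {n : ℕ | ∃ S : V → V → Prop, ValidSchedule G S ∧ depthD S = n} with hT
  have hTne : T.Nonempty := ⟨depthD S, S, hS, rfl⟩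
  obtain ⟨S0, hS0, hd0⟩ := Nat.sInf_mem hTne
  apply le_antisymm
  · rw [← hχ]
    have h1 : sInf T ≤ depthD S := Nat.sInf_le ⟨S, hS, rfl⟩
    exact_mod_cast h1.trans hd
  · rw [← hd0]
    exact (aux_colorable_of_valid hS0).chromaticNumber_le
end

section
/- Let G = (V, E) be a finite undirected graph with valid schedule D (a DAG on V in which every edge of G has a directed path between its endpoints). For every directed path P in the level schedule D' built from the depth-coloring of D (vertices grouped by their depth in D, edges of G oriented from lower depth-class to higher depth-class), each consecutive pair of vertices on P is connected by a directed path in D; consequently the weighted latency of D' is at most the weighted latency of D for any weight function ℓ : V → ℕ+. -/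
section Aux

variable {V : Type*} {S : V → V → Prop}

private lemma chain_transGen {a : V} {t : List V} (h : List.Chain S a t) {b : V} (hb : b ∈ t) :
    Relation.TransGen S a b := by
  induction t generalizing a with
  | nil => cases hb
  | cons c t ih =>
    have h : S a c ∧ List.Chain S c t := List.isChain_cons_cons.1 h
    rcases List.mem_cons.1 hb with rfl | hb
    · exact .single h.1
    · exact (Relation.TransGen.single h.1).trans (ih h.2 hb)

private lemma acyclic_nodup (hA : Acyclic S) {l : List V} (hc : l.Chain' S) : l.Nodup := by
  induction l with
  | nil => exact List.nodup_nil
  | cons a t ih =>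
    rw [List.Chain', List.isChain_cons] at hc
    refine List.nodup_cons.2 ⟨fun ha => ?_, ih hc.2⟩
    · -- chain from a into t gives a cycle
      have : List.Chain S a t := List.isChain_cons.2 hc
      exact hA a (chain_transGen this ha)

private lemma transGen_path {u v : V} (hT : Relation.TransGen S u v) :
    ∃ mid : List V, (u :: mid ++ [v]).Chain' S := by
  induction hT using Relation.TransGen.head_induction_on with
  | single h => exact ⟨[], by simp [List.Chain', h]⟩
  | head h _ ihh =>
    obtain ⟨mid, hmid⟩ := ihh
    exact ⟨_ :: mid, List.isChain_cons_cons.2 ⟨h, hmid⟩⟩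

/-- Splice: replace each `TransGen` edge of a chain by an actual `S`-path. -/
private lemma splice : ∀ (l : List V), l ≠ [] → l.Chain' (Relation.TransGen S) →
    ∃ l' : List V, l'.Chain' S ∧ l.Sublist l' ∧ l'.head? = l.head? ∧ l'.getLast? = l.getLast?
  | [], h, _ => absurd rfl h
  | [a], _, _ => ⟨[a], by simp [List.Chain']⟩
  | a :: b :: t, _, hc => by
    rw [List.Chain', List.isChain_cons_cons] at hc
    obtain ⟨l'', hc'', hsub'', hh'', hl''⟩ := splice (b :: t) (by simp) hc.2
    obtain ⟨mid, hmid⟩ := transGen_path hc.1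
    refine ⟨a :: mid ++ l'', ?_, ?_, by simp, ?_⟩
    · have hne'' : l'' ≠ [] := by
        intro h; rw [h] at hh''; simp at hh''
      rw [show a :: mid ++ l'' = (a :: mid) ++ l'' from by simp,
        List.Chain', List.isChain_append]
      rw [show a :: mid ++ [b] = (a :: mid) ++ [b] from by simp,
        List.Chain', List.isChain_append] at hmid
      refine ⟨hmid.1, hc'', ?_⟩
      intro x hx y hy
      have hy' : y = b := by
        rw [hh''] at hy; simpa [eq_comm] using hy
      subst hy'
      exact hmid.2.2 x hx _ (by simp)
    · refine List.Sublist.cons₂ a ?_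
      exact hsub''.trans (List.sublist_append_right mid l'')
    · have hne'' : l'' ≠ [] := by
        intro h; rw [h] at hh''; simp at hh''
      rw [show a :: mid ++ l'' = (a :: mid) ++ l'' from by simp,
        List.getLast?_append_of_ne_nil _ hne'', hl'']
      simp [List.getLast?_cons_cons]

private lemma vdepth_bddAbove [Fintype V] {v : V} :
    BddAbove {n | ∃ l : List V, IsDipath S l ∧ l.getLast? = some v ∧ l.length = n} := by
  refine ⟨Fintype.card V, fun n hn => ?_⟩
  obtain ⟨l, hl, -, rfl⟩ := hn
  exact hl.2.1.length_le_card

private lemma vdepth_lt [Fintype V] (hA : Acyclic S) {u v : V}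
    (hT : Relation.TransGen S u v) : vdepth S u < vdepth S v := by
  have hmem : vdepth S u ∈
      {n | ∃ l : List V, IsDipath S l ∧ l.getLast? = some u ∧ l.length = n} := by
    apply Nat.sSup_mem
    · exact ⟨1, [u], ⟨by simp, by simp, by simp [List.Chain']⟩, by simp, rfl⟩
    · exact vdepth_bddAbove
  obtain ⟨l, hl, hlast, hlen⟩ := hmem
  obtain ⟨mid, hmid⟩ := transGen_path hT
  -- extend l by mid ++ [v]
  have hc' : (l ++ (mid ++ [v])).Chain' S := by
    rw [List.Chain', List.isChain_append]
    rw [show u :: mid ++ [v] = [u] ++ (mid ++ [v]) from by simp, List.Chain', List.isChain_append] at hmid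
    refine ⟨hl.2.2, hmid.2.1, ?_⟩
    intro x hx y hy
    have hx' : x = u := by rw [hlast] at hx; simpa [eq_comm] using hx
    subst hx'
    exact hmid.2.2 _ (by simp) y hy
  have hdip : IsDipath S (l ++ (mid ++ [v])) := ⟨by simp, acyclic_nodup hA hc', hc'⟩
  have hle : (l ++ (mid ++ [v])).length ≤ vdepth S v := by
    apply le_csSup vdepth_bddAbove
    exact ⟨l ++ (mid ++ [v]), hdip, by simp [List.getLast?_append_of_ne_nil], rfl⟩
  have : l.length < (l ++ (mid ++ [v])).length := by simp
  omega

end Aux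

theorem stmt6 {V : Type*} [Fintype V] (G : SimpleGraph V) (S : V → V → Prop)
    (hvalid : ValidSchedule G S) (len : V → ℕ+) :
    (∀ l : List V,
        IsDipath (fun u v => G.Adj u v ∧ vdepth S u < vdepth S v) l →
        l.Chain' (Relation.TransGen S)) ∧
    wdepth (fun u v => G.Adj u v ∧ vdepth S u < vdepth S v) len ≤ wdepth S len := by
  obtain ⟨hA, hE⟩ := hvalid
  have key : ∀ u v : V, G.Adj u v → vdepth S u < vdepth S v → Relation.TransGen S u v := by
    intro u v hadj hlt
    rcases hE u v hadj with h | h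
    · exact h
    · exact absurd (vdepth_lt hA h) (lt_asymm hlt)
  have part1 : ∀ l : List V,
      IsDipath (fun u v => G.Adj u v ∧ vdepth S u < vdepth S v) l →
      l.Chain' (Relation.TransGen S) := by
    intro l hl
    exact List.IsChain.imp (fun ⦃a b⦄ hab => key a b hab.1 hab.2) hl.2.2
  refine ⟨part1, ?_⟩
  apply csSup_le'
  rintro n ⟨l, hl, rfl⟩
  obtain ⟨l', hc', hsub, hh, -⟩ := splice l hl.1 (part1 l hl)
  have hne' : l' ≠ [] := by
    intro h; subst h
    exact hl.1 (List.sublist_nil.1 hsub)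
  have hbdd : BddAbove {n | ∃ m : List V, IsDipath S m ∧ (m.map fun v => (len v : ℕ)).sum = n} := by
    refine ⟨∑ v : V, (len v : ℕ), fun n hn => ?_⟩
    obtain ⟨m, hm, rfl⟩ := hn
    classical
    calc (m.map fun v => (len v : ℕ)).sum = m.toFinset.sum (fun v => (len v : ℕ)) :=
          (List.sum_toFinset _ hm.2.1).symm
      _ ≤ ∑ v : V, (len v : ℕ) :=
          Finset.sum_le_sum_of_subset (Finset.subset_univ _)
  calc (l.map fun v => (len v : ℕ)).sum ≤ (l'.map fun v => (len v : ℕ)).sum :=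
        List.Sublist.sum_le_sum (hsub.map _) (by simp)
    _ ≤ wdepth S len := le_csSup hbdd ⟨l', ⟨hne', acyclic_nodup hA hc', hc'⟩, rfl⟩
end

section
/- There exists a finite undirected graph G with a weight function ℓ : V → ℕ+ and two proper k-colorings c₁ and c₂ of G using the same minimum number of colors k = χ(G), such that the weighted depths of the level-schedule DAGs induced by c₁ and c₂ (orienting edges from lower to higher color, weighted depth = max over directed paths of sum of vertex weights) are different. In particular, for heterogeneous (weighted) vertices, minimal colorings do not all yield the same latency. -/
/-- Potential-function bound on chain sums. -/
lemma chain_sum_le_psi {V : Type*} (S : V → V → Prop) (len Ψ : V → ℕ)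
    (h1 : ∀ v, len v ≤ Ψ v) (h2 : ∀ u v, S u v → len u + Ψ v ≤ Ψ u) :
    ∀ (t : List V) (a : V), (a :: t).Chain' S → ((a :: t).map len).sum ≤ Ψ a := by
  intro t
  induction t with
  | nil => intro a _; simpa using h1 a
  | cons b t' ih =>
    intro a hc
    simp only [List.Chain', List.isChain_cons_cons] at hc
    have := ih b hc.2
    simp only [List.map_cons, List.sum_cons] at this ⊢
    calc len a + (len b + (t'.map len).sum) ≤ len a + Ψ b := by omega
    _ ≤ Ψ a := h2 a b hc.1

lemma wdepth_eq {V : Type*} (S : V → V → Prop) (len : V → ℕ+) (m : ℕ)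
    (l : List V) (hl : IsDipath S l) (hsum : (l.map fun v => (len v : ℕ)).sum = m)
    (hub : ∀ n ∈ {n | ∃ l : List V, IsDipath S l ∧ (l.map fun v => (len v : ℕ)).sum = n}, n ≤ m) :
    wdepth S len = m := by
  apply le_antisymm
  · exact csSup_le ⟨m, l, hl, hsum⟩ hub
  · exact le_csSup ⟨m, hub⟩ ⟨l, hl, hsum⟩

/-- The example conflict graph: a triangle 0,1,2 with a pendant vertex 3 attached to 0. -/
def Gex : SimpleGraph (Fin 4) := SimpleGraph.fromRel
  (fun u v => (u = 0 ∧ v = 1) ∨ (u = 0 ∧ v = 2) ∨ (u = 1 ∧ v = 2) ∨ (u = 0 ∧ v = 3))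

def lenex : Fin 4 → ℕ+ := ![1, 1, 1, 2]

def cex₁ : Fin 4 → Fin 3 := ![0, 1, 2, 1]

def cex₂ : Fin 4 → Fin 3 := ![1, 0, 2, 0]

lemma Gex_adj : ∀ u v : Fin 4, Gex.Adj u v ↔ u ≠ v ∧
    ((u = 0 ∧ v = 1) ∨ (u = 0 ∧ v = 2) ∨ (u = 1 ∧ v = 2) ∨ (u = 0 ∧ v = 3) ∨
     (v = 0 ∧ u = 1) ∨ (v = 0 ∧ u = 2) ∨ (v = 1 ∧ u = 2) ∨ (v = 0 ∧ u = 3)) := by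
  intro u v
  constructor
  · rintro ⟨hne, h | h⟩ <;> exact ⟨hne, by tauto⟩
  · rintro ⟨hne, h⟩
    exact ⟨hne, by tauto⟩

lemma Sex₁ : ∀ u v : Fin 4, (Gex.Adj u v ∧ cex₁ u < cex₁ v) ↔
    ((u = 0 ∧ v = 1) ∨ (u = 0 ∧ v = 2) ∨ (u = 1 ∧ v = 2) ∨ (u = 0 ∧ v = 3)) := by
  intro u v
  rw [Gex_adj]
  revert u v
  decide

lemma Sex₂ : ∀ u v : Fin 4, (Gex.Adj u v ∧ cex₂ u < cex₂ v) ↔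
    ((u = 1 ∧ v = 0) ∨ (u = 0 ∧ v = 2) ∨ (u = 1 ∧ v = 2) ∨ (u = 3 ∧ v = 0)) := by
  intro u v
  rw [Gex_adj]
  revert u v
  decide

theorem stmt15 :
    ∃ (V : Type) (_ : Fintype V) (G : SimpleGraph V) (len : V → ℕ+) (k : ℕ)
      (c₁ c₂ : V → Fin k),
      (∀ u v : V, G.Adj u v → c₁ u ≠ c₁ v) ∧
      (∀ u v : V, G.Adj u v → c₂ u ≠ c₂ v) ∧
      G.chromaticNumber = (k : ℕ∞) ∧
      wdepth (fun u v => G.Adj u v ∧ c₁ u < c₁ v) len ≠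
        wdepth (fun u v => G.Adj u v ∧ c₂ u < c₂ v) len := by
  classical
  have hp1 : ∀ u v : Fin 4, Gex.Adj u v → cex₁ u ≠ cex₁ v := by
    intro u v h
    rw [Gex_adj] at h
    revert h; revert u v
    decide
  have hp2 : ∀ u v : Fin 4, Gex.Adj u v → cex₂ u ≠ cex₂ v := by
    intro u v h
    rw [Gex_adj] at h
    revert h; revert u v
    decide
  have hcol3 : Gex.Colorable 3 := ⟨SimpleGraph.Coloring.mk cex₁ (fun h => hp1 _ _ h)⟩
  have hnot2 : ¬ Gex.Colorable 2 := by
    rintro ⟨C⟩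
    have h01 : Gex.Adj 0 1 := by rw [Gex_adj]; decide
    have h02 : Gex.Adj 0 2 := by rw [Gex_adj]; decide
    have h12 : Gex.Adj 1 2 := by rw [Gex_adj]; decide
    have d01 := C.valid h01
    have d02 := C.valid h02
    have d12 := C.valid h12
    have : (C 0).val < 2 := (C 0).isLt
    have : (C 1).val < 2 := (C 1).isLt
    have : (C 2).val < 2 := (C 2).isLt
    have e01 : (C 0).val ≠ (C 1).val := fun h => d01 (Fin.ext h)
    have e02 : (C 0).val ≠ (C 2).val := fun h => d02 (Fin.ext h)
    have e12 : (C 1).val ≠ (C 2).val := fun h => d12 (Fin.ext h)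
    omega
  have hchrom : Gex.chromaticNumber = (3 : ℕ∞) := by
    apply le_antisymm
    · exact hcol3.chromaticNumber_le
    · rw [hcol3.chromaticNumber_eq_sInf]
      have h3 : (3 : ℕ) ≤ sInf {n' : ℕ | Gex.Colorable n'} := by
        apply le_csInf ⟨3, by exact hcol3⟩
        intro n hn
        have hn' : Gex.Colorable n := hn
        by_contra hlt
        exact hnot2 (hn'.mono (by omega))
      exact_mod_cast h3
  have hw1 : wdepth (fun u v => Gex.Adj u v ∧ cex₁ u < cex₁ v) lenex = 3 := by
    apply wdepth_eq _ _ _ [0, 1, 2]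
    · refine ⟨by simp, by decide, ?_⟩
      simp only [List.Chain', List.isChain_cons_cons, List.isChain_singleton, and_true, Sex₁]
      decide
    · decide
    · rintro n ⟨l, ⟨hne, _, hch⟩, hsum⟩
      obtain ⟨a, t, rfl⟩ := List.exists_cons_of_ne_nil hne
      have hpot : ∀ u v : Fin 4, (fun u v => Gex.Adj u v ∧ cex₁ u < cex₁ v) u v →
          (fun v => (lenex v : ℕ)) u + (![3, 2, 1, 2] : Fin 4 → ℕ) v ≤ ![3, 2, 1, 2] u := by
        intro u v h
        rw [Sex₁] at h
        revert h; revert u v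
        decide
      have := chain_sum_le_psi (fun u v => Gex.Adj u v ∧ cex₁ u < cex₁ v)
        (fun v => (lenex v : ℕ)) ![3, 2, 1, 2] (by decide) hpot t a hch
      have hb : ∀ x : Fin 4, (![3, 2, 1, 2] : Fin 4 → ℕ) x ≤ 3 := by decide
      have hb := hb a
      omega
  have hw2 : wdepth (fun u v => Gex.Adj u v ∧ cex₂ u < cex₂ v) lenex = 4 := by
    apply wdepth_eq _ _ _ [3, 0, 2]
    · refine ⟨by simp, by decide, ?_⟩
      simp only [List.Chain', List.isChain_cons_cons, List.isChain_singleton, and_true, Sex₂]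
      decide
    · decide
    · rintro n ⟨l, ⟨hne, _, hch⟩, hsum⟩
      obtain ⟨a, t, rfl⟩ := List.exists_cons_of_ne_nil hne
      have hpot : ∀ u v : Fin 4, (fun u v => Gex.Adj u v ∧ cex₂ u < cex₂ v) u v →
          (fun v => (lenex v : ℕ)) u + (![2, 3, 1, 4] : Fin 4 → ℕ) v ≤ ![2, 3, 1, 4] u := by
        intro u v h
        rw [Sex₂] at h
        revert h; revert u v
        decide
      have := chain_sum_le_psi (fun u v => Gex.Adj u v ∧ cex₂ u < cex₂ v)
        (fun v => (lenex v : ℕ)) ![2, 3, 1, 4] (by decide) hpot t a hch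
      have hb : ∀ x : Fin 4, (![2, 3, 1, 4] : Fin 4 → ℕ) x ≤ 4 := by decide
      have hb := hb a
      omega
  exact ⟨Fin 4, inferInstance, Gex, lenex, 3, cex₁, cex₂, hp1, hp2, hchrom,
    by rw [hw1, hw2]; omega⟩
end
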